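/- Let h, h' ∈ Z[1/p] ⊂ G = Z[1/p] ⋊ Z with word distance d_C(h, h') ≤ r with respect to a finite generating set C. Then | |h| − |h'| | ≤ M·|p|^{rc/2} and |denom(h) − denom(h')| ≤ M·|p|^{rc/2}, where M and c are the constants of Lemma 1 (c is the maximal |Z-coordinate| of a generator, M depends only on C). -/

import Mathlib

namespace BS

/-- `Zp p` is the set of `p`-adic fractions `m / p^n` inside `ℚ`, i.e. `ℤ[1/p]`. -/
def Zp (p : ℤ) : Set ℚ := {q | ∃ (m : ℤ) (n : ℕ), q = (m : ℚ) / (p : ℚ) ^ n}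

lemma zero_mem (p : ℤ) : (0 : ℚ) ∈ Zp p := ⟨0, 0, by norm_num⟩

lemma one_mem (p : ℤ) : (1 : ℚ) ∈ Zp p := ⟨1, 0, by norm_num⟩

lemma cast_ne_zero {p : ℤ} (h : 1 < |p|) : (p : ℚ) ≠ 0 := by
  have hp : p ≠ 0 := by rintro rfl; simp at h
  exact_mod_cast hp

lemma neg_mem {p : ℤ} {q : ℚ} (hq : q ∈ Zp p) : -q ∈ Zp p := by
  obtain ⟨m, n, rfl⟩ := hq
  exact ⟨-m, n, by push_cast; ring⟩

lemma add_mem {p : ℤ} (hp : (p : ℚ) ≠ 0) {q r : ℚ} (hq : q ∈ Zp p) (hr : r ∈ Zp p) :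
    q + r ∈ Zp p := by
  obtain ⟨m1, n1, rfl⟩ := hq
  obtain ⟨m2, n2, rfl⟩ := hr
  refine ⟨m1 * p ^ n2 + m2 * p ^ n1, n1 + n2, ?_⟩
  push_cast
  field_simp
  rw [pow_add]; ring

lemma zpow_mul_mem {p : ℤ} (hp : (p : ℚ) ≠ 0) (e : ℤ) {q : ℚ} (hq : q ∈ Zp p) :
    (p : ℚ) ^ e * q ∈ Zp p := by
  obtain ⟨m, n, rfl⟩ := hq
  obtain ⟨k, hk | hk⟩ := e.eq_nat_or_neg
  · subst hk
    refine ⟨m * p ^ k, n, ?_⟩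
    push_cast [zpow_natCast]
    field_simp
  · subst hk
    refine ⟨m, n + k, ?_⟩
    rw [zpow_neg, zpow_natCast]
    push_cast
    field_simp
    rw [pow_add]; ring

lemma zpow_mem {p : ℤ} (hp : (p : ℚ) ≠ 0) (e : ℤ) : (p : ℚ) ^ e ∈ Zp p := by
  simpa using zpow_mul_mem hp e (one_mem p)

lemma sub_mem {p : ℤ} (hp : (p : ℚ) ≠ 0) {q r : ℚ} (hq : q ∈ Zp p) (hr : r ∈ Zp p) :
    q - r ∈ Zp p := by
  simpa [sub_eq_add_neg] using add_mem hp hq (neg_mem hr)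

/-- The underlying type of the semidirect product `ℚ ⋊ ℤ` (with `ℤ` acting by
multiplication by `p`); `f` is the `ℚ`-coordinate and `c` the `ℤ`-coordinate. -/
@[ext] structure QZ (p : ℤ) where
  f : ℚ
  c : ℤ

instance (p : ℤ) [hF : Fact (1 < |p|)] : Group (QZ p) where
  mul x y := ⟨x.f + (p : ℚ) ^ (-x.c) * y.f, x.c + y.c⟩
  one := ⟨0, 0⟩
  inv x := ⟨-((p : ℚ) ^ x.c * x.f), -x.c⟩
  mul_assoc x y z := by
    have hp := cast_ne_zero hF.out
    refine QZ.ext ?_ ?_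
    · show (x.f + (p : ℚ) ^ (-x.c) * y.f) + (p : ℚ) ^ (-(x.c + y.c)) * z.f
        = x.f + (p : ℚ) ^ (-x.c) * (y.f + (p : ℚ) ^ (-y.c) * z.f)
      rw [neg_add, zpow_add₀ hp]
      ring
    · show (x.c + y.c) + z.c = x.c + (y.c + z.c); ring
  one_mul x := by
    refine QZ.ext ?_ ?_
    · show (0 : ℚ) + (p : ℚ) ^ (-(0 : ℤ)) * x.f = x.f
      simp
    · show (0 : ℤ) + x.c = x.c; simp
  mul_one x := by
    refine QZ.ext ?_ ?_
    · show x.f + (p : ℚ) ^ (-x.c) * 0 = x.f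
      simp
    · show x.c + (0 : ℤ) = x.c; simp
  inv_mul_cancel x := by
    have hp := cast_ne_zero hF.out
    refine QZ.ext ?_ ?_
    · show -((p : ℚ) ^ x.c * x.f) + (p : ℚ) ^ (-(-x.c)) * x.f = 0
      rw [neg_neg]
      ring
    · show -x.c + x.c = (0 : ℤ); ring

@[simp] lemma mul_f {p : ℤ} [Fact (1 < |p|)] (x y : QZ p) :
    (x * y).f = x.f + (p : ℚ) ^ (-x.c) * y.f := rfl

@[simp] lemma mul_c {p : ℤ} [Fact (1 < |p|)] (x y : QZ p) : (x * y).c = x.c + y.c := rfl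

@[simp] lemma one_f {p : ℤ} [Fact (1 < |p|)] : (1 : QZ p).f = 0 := rfl
@[simp] lemma one_c {p : ℤ} [Fact (1 < |p|)] : (1 : QZ p).c = 0 := rfl
@[simp] lemma inv_f {p : ℤ} [Fact (1 < |p|)] (x : QZ p) :
    (x⁻¹).f = -((p : ℚ) ^ x.c * x.f) := rfl
@[simp] lemma inv_c {p : ℤ} [Fact (1 < |p|)] (x : QZ p) : (x⁻¹).c = -x.c := rfl

/-- The group `G = ℤ[1/p] ⋊ ℤ`, as a subgroup of `ℚ ⋊ ℤ`. -/
def HZ (p : ℤ) [hF : Fact (1 < |p|)] : Subgroup (QZ p) where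
  carrier := {x | x.f ∈ Zp p}
  mul_mem' {a b} ha hb :=
    add_mem (cast_ne_zero hF.out) ha (zpow_mul_mem (cast_ne_zero hF.out) _ hb)
  one_mem' := zero_mem p
  inv_mem' {a} ha := neg_mem (zpow_mul_mem (cast_ne_zero hF.out) _ ha)

/-- Build an element of `ℤ[1/p] ⋊ ℤ`. -/
def mk {p : ℤ} [Fact (1 < |p|)] (f : ℚ) (c : ℤ) (h : f ∈ Zp p) : HZ p := ⟨⟨f, c⟩, h⟩

/-- The ball of radius `n` in the Cayley graph of a group with generating set `C`. -/
def ball {H : Type*} [Group H] (C : Set H) (n : ℕ) : Set H :=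
  {g | ∃ l : List H, (∀ x ∈ l, x ∈ C) ∧ l.prod = g ∧ l.length ≤ n}

/-- `C` generates the group `H`. -/
def Generates {H : Type*} [Group H] (C : Set H) : Prop :=
  ∀ g : H, ∃ l : List H, (∀ x ∈ l, x ∈ C) ∧ l.prod = g

/-- `C` is symmetric (closed under inverses). -/
def Symm {H : Type*} [Group H] (C : Set H) : Prop := ∀ x ∈ C, x⁻¹ ∈ C

/-- Word length with respect to the generating set `C`. -/
noncomputable def wl {H : Type*} [Group H] (C : Set H) (g : H) : ℕ :=
  sInf {n | g ∈ ball C n}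

/-- `G` is almost convex with respect to `C`: for every `k` there is `N` such that any two
points of `B(n)` at distance at most `k` are joined by a path of length at most `N`
staying inside `B(n)`. -/
def AlmostConvex {H : Type*} [Group H] (C : Set H) : Prop :=
  ∀ k : ℕ, ∃ N : ℕ, ∀ n : ℕ, ∀ g g' : H, g ∈ ball C n → g' ∈ ball C n →
    g⁻¹ * g' ∈ ball C k →
    ∃ l : List H, (∀ x ∈ l, x ∈ C) ∧ l.prod = g⁻¹ * g' ∧ l.length ≤ N ∧
      ∀ m : ℕ, g * (l.take m).prod ∈ ball C n

/-- The least `n` such that `p^n * h` is an integer. -/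
noncomputable def denomExp (p : ℤ) (h : ℚ) : ℕ :=
  sInf {n | ∃ m : ℤ, (p : ℚ) ^ n * h = (m : ℚ)}

/-- `denom h = |p|^n` for the least `n ≥ 0` with `p^n h ∈ ℤ`. -/
noncomputable def denom (p : ℤ) (h : ℚ) : ℚ := (|p| : ℚ) ^ denomExp p h

/-- The relator of the Baumslag–Solitar group `B(1,p)`: here `true` plays the role of
the generator `a` and `false` that of `t`, and the relator is `t⁻¹ a t (a^p)⁻¹`. -/
def bsRels (p : ℤ) : Set (FreeGroup Bool) :=
  {(FreeGroup.of false)⁻¹ * FreeGroup.of true * FreeGroup.of false *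
    (FreeGroup.of true ^ p)⁻¹}

/-- The Baumslag–Solitar group `B(1,p) = ⟨a, t ∣ t⁻¹ a t = a^p⟩`. -/
abbrev BSG (p : ℤ) := PresentedGroup (bsRels p)

/-- The generator `a` of `B(1,p)`. -/
def bsa (p : ℤ) : BSG p := PresentedGroup.of true

/-- The generator `t` of `B(1,p)`. -/
def bst (p : ℤ) : BSG p := PresentedGroup.of false


lemma denomExp_nonempty {p : ℤ} (hp : (p : ℚ) ≠ 0) {q : ℚ} (hq : q ∈ Zp p) :
    {n : ℕ | ∃ m : ℤ, (p : ℚ) ^ n * q = (m : ℚ)}.Nonempty := by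
  obtain ⟨m, n, rfl⟩ := hq
  exact ⟨n, m, by field_simp⟩

lemma denomExp_spec {p : ℤ} (hp : (p : ℚ) ≠ 0) {q : ℚ} (hq : q ∈ Zp p) :
    ∃ m : ℤ, (p : ℚ) ^ denomExp p q * q = (m : ℚ) :=
  Nat.sInf_mem (denomExp_nonempty hp hq)

lemma denomExp_le {p : ℤ} {q : ℚ} {n : ℕ} {m : ℤ} (h : (p : ℚ) ^ n * q = (m : ℚ)) :
    denomExp p q ≤ n := Nat.sInf_le ⟨m, h⟩

lemma pow_mul_int {p : ℤ} {q : ℚ} {e k : ℕ} (hq : ∃ m : ℤ, (p : ℚ) ^ e * q = (m : ℚ))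
    (hk : e ≤ k) : ∃ m : ℤ, (p : ℚ) ^ k * q = (m : ℚ) := by
  obtain ⟨m, hm⟩ := hq
  refine ⟨p ^ (k - e) * m, ?_⟩
  push_cast
  rw [← hm, ← mul_assoc, ← pow_add]
  congr 2
  omega

lemma denomExp_neg (p : ℤ) (q : ℚ) : denomExp p (-q) = denomExp p q := by
  unfold denomExp
  congr 1
  ext n
  constructor
  · rintro ⟨m, hm⟩; exact ⟨-m, by push_cast; linarith⟩
  · rintro ⟨m, hm⟩; exact ⟨-m, by push_cast; linarith⟩

lemma denomExp_add_le {p : ℤ} (hp : (p : ℚ) ≠ 0) {q q' : ℚ} (hq : q ∈ Zp p)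
    (hq' : q' ∈ Zp p) :
    denomExp p (q + q') ≤ max (denomExp p q) (denomExp p q') := by
  obtain ⟨m1, hm1⟩ := pow_mul_int (denomExp_spec hp hq)
    (le_max_left (denomExp p q) (denomExp p q'))
  obtain ⟨m2, hm2⟩ := pow_mul_int (denomExp_spec hp hq')
    (le_max_right (denomExp p q) (denomExp p q'))
  exact denomExp_le (m := m1 + m2) (by push_cast; rw [mul_add, hm1, hm2])

/-- Lemma 2: if `h, h' ∈ ℤ[1/p] ⊂ G` and `d_C(h,h') ≤ r`, then
`||h| − |h'|| ≤ M |p|^{rc/2}` and `|denom h − denom h'| ≤ M |p|^{rc/2}`, where `M` is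
a constant as in Lemma 1. -/
theorem lemma_two (p : ℤ) [Fact (1 < |p|)] (C : Set (HZ p))
    (hCfin : C.Finite) (hCsym : Symm C) (hCgen : Generates C)
    (c : ℤ) (hcmax : ∀ g ∈ C, |((g : QZ p)).c| ≤ c)
    (M : ℝ)
    (hM : ∀ n : ℕ, ∀ f : ℚ, ∀ hf : f ∈ Zp p,
      mk f 0 hf ∈ ball C n →
        ((|f| : ℚ) : ℝ) ≤ M * (|p| : ℝ) ^ (((n : ℝ) * (c : ℝ)) / 2) ∧
        ((denom p f : ℚ) : ℝ) ≤ M * (|p| : ℝ) ^ (((n : ℝ) * (c : ℝ)) / 2))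
    (h h' : ℚ) (hh : h ∈ Zp p) (hh' : h' ∈ Zp p) (r : ℕ)
    (hd : (mk h 0 hh)⁻¹ * mk h' 0 hh' ∈ ball C r) :
    |((|h| : ℚ) : ℝ) - ((|h'| : ℚ) : ℝ)| ≤ M * (|p| : ℝ) ^ (((r : ℝ) * (c : ℝ)) / 2) ∧
    |((denom p h : ℚ) : ℝ) - ((denom p h' : ℚ) : ℝ)| ≤
      M * (|p| : ℝ) ^ (((r : ℝ) * (c : ℝ)) / 2) := by
  have hF : (1 : ℤ) < |p| := Fact.out
  have hp := cast_ne_zero hF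
  have hP : (1 : ℚ) < (|p| : ℚ) := by exact_mod_cast hF
  have hsub : h' - h ∈ Zp p := sub_mem hp hh' hh
  have hball : mk (h' - h) 0 hsub ∈ ball C r := by
    have heq : mk (h' - h) 0 hsub = (mk h 0 hh)⁻¹ * mk h' 0 hh' := by
      apply Subtype.ext
      apply QZ.ext
      · show h' - h = ((⟨h, 0⟩ : QZ p)⁻¹ * ⟨h', 0⟩).f
        simp
        ring
      · show (0 : ℤ) = ((⟨h, 0⟩ : QZ p)⁻¹ * ⟨h', 0⟩).c
        simp
    rw [heq]; exact hd
  obtain ⟨hM1, hM2⟩ := hM r (h' - h) hsub hball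
  constructor
  · refine le_trans ?_ hM1
    have := abs_abs_sub_abs_le_abs_sub ((h' : ℝ)) ((h : ℝ))
    rw [abs_sub_comm |(h' : ℝ)| _] at this
    push_cast
    convert this using 2 <;> push_cast <;> ring
  · refine le_trans ?_ hM2
    have key : |denom p h - denom p h'| ≤ denom p (h' - h) := by
      set a := denomExp p h with ha
      set b := denomExp p h' with hb
      set d := denomExp p (h' - h) with hdd
      have hd2 : denomExp p (h - h') = d := by
        rw [show h - h' = -(h' - h) by ring, denomExp_neg]
      have hpos : (0 : ℚ) < (|p| : ℚ) := by linarith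
      rcases lt_trichotomy a b with hab | hab | hab
      · have hble : b ≤ max d a := by
          have := denomExp_add_le hp hsub hh
          simpa [show h' - h + h = h' by ring] using this
        have hbd : b ≤ d := by omega
        have h1 : (|p| : ℚ) ^ a ≤ (|p| : ℚ) ^ b := pow_le_pow_right₀ hP.le hab.le
        have h2 : (|p| : ℚ) ^ b ≤ (|p| : ℚ) ^ d := pow_le_pow_right₀ hP.le hbd
        have h3 : (0 : ℚ) < (|p| : ℚ) ^ a := pow_pos hpos a
        unfold denom
        rw [← ha, ← hb, ← hdd, abs_of_nonpos (by linarith)]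
        linarith
      · simp only [denom, ← ha, ← hb, hab, sub_self, abs_zero]
        positivity
      · have hale : a ≤ max d b := by
          have := denomExp_add_le hp (sub_mem hp hh hh') hh'
          simpa [hd2, show h - h' + h' = h by ring] using this
        have had : a ≤ d := by omega
        have h1 : (|p| : ℚ) ^ b ≤ (|p| : ℚ) ^ a := pow_le_pow_right₀ hP.le hab.le
        have h2 : (|p| : ℚ) ^ a ≤ (|p| : ℚ) ^ d := pow_le_pow_right₀ hP.le had
        have h3 : (0 : ℚ) < (|p| : ℚ) ^ b := pow_pos hpos b
        unfold denom
        rw [← ha, ← hb, ← hdd, abs_of_nonneg (by linarith)]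
        linarith
    calc |((denom p h : ℚ) : ℝ) - ((denom p h' : ℚ) : ℝ)|
        = ((|denom p h - denom p h'| : ℚ) : ℝ) := by push_cast; ring_nf
      _ ≤ ((denom p (h' - h) : ℚ) : ℝ) := by exact_mod_cast key

end BS
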